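/- (Circumsphere of the resistive embedding) Let Q be symmetric PSD with ker(Q) = span(1), let B ∈ ℝ^{(n−1)×n} satisfy BᵀB = Q† and B1 = 0, and let p, σ² be the resistance curvature and radius of Q. Then for every i ∈ [n], ‖B(p − 1ᵢ)‖² = σ²; that is, the point Bp is equidistant (at distance σ) from all embedded vertices B1ᵢ, so it is the circumcenter of the simplex with circumradius σ. -/

import Mathlib

open Matrix Classical

/-- The Moore–Penrose pseudoinverse of a real matrix, defined via its four
characterizing Penrose equations (which have a unique solution). -/
noncomputable def pinv {m k : Type*} [Fintype m] [Fintype k]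
    (A : Matrix m k ℝ) : Matrix k m ℝ :=
  if h : ∃ X : Matrix k m ℝ,
      A * X * A = A ∧ X * A * X = X ∧ (A * X)ᵀ = A * X ∧ (X * A)ᵀ = X * A
  then h.choose else 0

/-- Uniqueness of the Penrose equations' solution. -/
lemma penrose_unique {m k : Type*} [Fintype m] [Fintype k]
    (A : Matrix m k ℝ) (X Y : Matrix k m ℝ)
    (hX : A * X * A = A ∧ X * A * X = X ∧ (A * X)ᵀ = A * X ∧ (X * A)ᵀ = X * A)
    (hY : A * Y * A = A ∧ Y * A * Y = Y ∧ (A * Y)ᵀ = A * Y ∧ (Y * A)ᵀ = Y * A) :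
    X = Y := by
  obtain ⟨hX1, hX2, hX3, hX4⟩ := hX
  obtain ⟨hY1, hY2, hY3, hY4⟩ := hY
  have hAX : A * X = A * Y := by
    calc A * X = (A * Y * A) * X := by rw [hY1]
      _ = (A * Y)ᵀ * (A * X) := by rw [hY3, Matrix.mul_assoc]
      _ = (A * Y)ᵀ * (A * X)ᵀ := by rw [hX3]
      _ = ((A * X) * (A * Y))ᵀ := by simp [Matrix.transpose_mul, Matrix.mul_assoc]
      _ = ((A * X * A) * Y)ᵀ := by simp [Matrix.mul_assoc]
      _ = (A * Y)ᵀ := by rw [hX1]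
      _ = A * Y := hY3
  have hXA : X * A = Y * A := by
    calc X * A = X * (A * Y * A) := by rw [hY1]
      _ = (X * A) * (Y * A) := by rw [Matrix.mul_assoc, Matrix.mul_assoc]
      _ = (X * A)ᵀ * (Y * A)ᵀ := by rw [hX4, hY4]
      _ = ((Y * A) * (X * A))ᵀ := by simp [Matrix.transpose_mul, Matrix.mul_assoc]
      _ = (Y * (A * X * A))ᵀ := by simp [Matrix.mul_assoc]
      _ = (Y * A)ᵀ := by rw [hX1]
      _ = Y * A := hY4
  calc X = X * A * X := hX2.symm
    _ = Y * A * X := by rw [hXA]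
    _ = Y * (A * Y) := by rw [Matrix.mul_assoc, hAX]
    _ = Y * A * Y := by rw [Matrix.mul_assoc]
    _ = Y := hY2

theorem circumsphere_of_resistive_embedding
    {n : ℕ} (hn : 2 ≤ n) (Q : Matrix (Fin n) (Fin n) ℝ)
    (hQ : Q.PosSemidef)
    (hker : ∀ v : Fin n → ℝ, Q.mulVec v = 0 ↔ ∃ c : ℝ, v = fun _ => c)
    (B : Matrix (Fin (n - 1)) (Fin n) ℝ)
    (hB : Bᵀ * B = pinv Q)
    (hB1 : B.mulVec (fun _ => 1) = 0)
    (ζ : Fin n → ℝ) (hζ : ζ = fun i => pinv Q i i)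
    (p : Fin n → ℝ)
    (hp : p = (1 / 2 : ℝ) • Q.mulVec ζ + (1 / (n : ℝ)) • ((fun _ => 1) : Fin n → ℝ))
    (σ2 : ℝ) (hσ2 : σ2 = (1 / 4) * (ζ ⬝ᵥ Q.mulVec ζ) + (1 / (n : ℝ)) * ∑ i, ζ i) :
    ∀ i : Fin n,
      B.mulVec (p - Pi.single i 1) ⬝ᵥ B.mulVec (p - Pi.single i 1) = σ2 := by
  have hn0 : (n : ℝ) ≠ 0 := by
    have : 0 < n := lt_of_lt_of_le (by norm_num) hn
    exact_mod_cast this.ne'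
  -- notation
  set ones : Fin n → ℝ := fun _ => 1 with hones
  set J : Matrix (Fin n) (Fin n) ℝ := Matrix.of (fun _ _ => (1:ℝ)) with hJ
  have hQ1 : Q *ᵥ ones = 0 := (hker ones).mpr ⟨1, rfl⟩
  have hQsym : Qᵀ = Q := hQ.1
  have hQJ : Q * J = 0 := by
    ext i j
    have := congrFun hQ1 i
    simpa [Matrix.mul_apply, Matrix.mulVec, dotProduct, hJ, hones] using this
  have hJQ : J * Q = 0 := by
    ext i j
    have := congrFun hQ1 j
    have h2 : ∑ k, Q j k = 0 := by simpa [Matrix.mulVec, dotProduct, hones] using this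
    have h3 : ∑ k, Q k j = 0 := by
      rw [← h2]; apply Finset.sum_congr rfl; intro k _
      conv_lhs => rw [← hQsym]
      rfl
    simpa [Matrix.mul_apply, hJ] using h3
  have hJJ : J * J = (n : ℝ) • J := by
    ext i j
    simp [Matrix.mul_apply, hJ, Finset.card_fin]
  set M : Matrix (Fin n) (Fin n) ℝ := Q + (n : ℝ)⁻¹ • J with hM
  have hMsym : Mᵀ = M := by
    rw [hM, Matrix.transpose_add, Matrix.transpose_smul, hQsym]
    congr 1
  have hMpd : M.PosDef := by
    refine Matrix.PosDef.of_dotProduct_mulVec_pos ?_ ?_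
    · exact hMsym
    · intro x hx
      have hx2 : star x = x := by simp
      have key : x ⬝ᵥ M *ᵥ x = x ⬝ᵥ Q *ᵥ x + (n:ℝ)⁻¹ * (∑ k, x k)^2 := by
        rw [hM, Matrix.add_mulVec, dotProduct_add, Matrix.smul_mulVec,
          dotProduct_smul]
        congr 1
        have : J *ᵥ x = fun _ => ∑ k, x k := by
          ext i; simp [Matrix.mulVec, dotProduct, hJ]
        rw [this]
        simp only [dotProduct, smul_eq_mul, sq]
        rw [← Finset.sum_mul]
      rw [hx2, key]
      rcases lt_or_eq_of_le (by simpa [hx2] using hQ.dotProduct_mulVec_nonneg x) with h | h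
      · have : 0 ≤ (n:ℝ)⁻¹ * (∑ k, x k)^2 := by positivity
        linarith
      · have hQx : Q *ᵥ x = 0 := by
          apply (hQ.dotProduct_mulVec_zero_iff x).mp
          rw [hx2]; exact h.symm
        obtain ⟨c, rfl⟩ := (hker x).mp hQx
        have hc : c ≠ 0 := by
          intro hc0; exact hx (by ext j; simp [hc0])
        have hsum : ∑ k : Fin n, (fun _ : Fin n => c) k = (n:ℝ) * c := by
          simp [Finset.card_fin, mul_comm]
        rw [← h, hsum, zero_add]
        have hnc : (n:ℝ) * c ≠ 0 := mul_ne_zero hn0 hc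
        have h1 : 0 < ((n:ℝ) * c) ^ 2 := by rw [sq]; exact mul_self_pos.mpr hnc
        have h2 : 0 < (n:ℝ)⁻¹ := by
          have : 0 < n := lt_of_lt_of_le (by norm_num) hn
          have : (0:ℝ) < n := by exact_mod_cast this
          exact inv_pos.mpr this
        exact mul_pos h2 h1
  have hMdet : IsUnit M.det := hMpd.det_pos.ne'.isUnit
  set N : Matrix (Fin n) (Fin n) ℝ := M⁻¹ with hN
  have hMN : M * N = 1 := Matrix.mul_nonsing_inv M hMdet
  have hNM : N * M = 1 := Matrix.nonsing_inv_mul M hMdet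
  have hNsym : Nᵀ = N := by rw [hN, Matrix.transpose_nonsing_inv, hMsym]
  have hJM : J * M = J := by
    rw [hM, Matrix.mul_add, hJQ, Matrix.mul_smul, hJJ, zero_add, smul_smul,
      inv_mul_cancel₀ hn0, one_smul]
  have hMJ : M * J = J := by
    rw [hM, Matrix.add_mul, hQJ, Matrix.smul_mul, hJJ, zero_add, smul_smul,
      inv_mul_cancel₀ hn0, one_smul]
  have hJN : J * N = J := by
    have h1 : (J * M) * N = J * N := by rw [hJM]
    rw [Matrix.mul_assoc, hMN, Matrix.mul_one] at h1
    exact h1.symm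
  have hNJ : N * J = J := by
    have h1 : N * (M * J) = N * J := by rw [hMJ]
    rw [← Matrix.mul_assoc, hNM, Matrix.one_mul] at h1
    exact h1.symm
  have hQN : Q * N = 1 - (n:ℝ)⁻¹ • J := by
    have h1 : (Q + (n:ℝ)⁻¹ • J) * N = 1 := by rw [← hM]; exact hMN
    rw [Matrix.add_mul, Matrix.smul_mul, hJN] at h1
    exact eq_sub_of_add_eq h1
  have hNQ : N * Q = 1 - (n:ℝ)⁻¹ • J := by
    have h1 : N * (Q + (n:ℝ)⁻¹ • J) = 1 := by rw [← hM]; exact hNM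
    rw [Matrix.mul_add, Matrix.mul_smul, hNJ] at h1
    exact eq_sub_of_add_eq h1
  set X : Matrix (Fin n) (Fin n) ℝ := N - (n:ℝ)⁻¹ • J with hX
  have hQX : Q * X = 1 - (n:ℝ)⁻¹ • J := by
    rw [hX, Matrix.mul_sub, Matrix.mul_smul, hQJ, smul_zero, sub_zero, hQN]
  have hXQ : X * Q = 1 - (n:ℝ)⁻¹ • J := by
    rw [hX, Matrix.sub_mul, Matrix.smul_mul, hJQ, smul_zero, sub_zero, hNQ]
  have hJX : J * X = 0 := by
    rw [hX, Matrix.mul_sub, hJN, Matrix.mul_smul, hJJ, smul_smul,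
      inv_mul_cancel₀ hn0, one_smul, sub_self]
  have hXJ : X * J = 0 := by
    rw [hX, Matrix.sub_mul, hNJ, Matrix.smul_mul, hJJ, smul_smul,
      inv_mul_cancel₀ hn0, one_smul, sub_self]
  have hJsymm : Jᵀ = J := by ext i j; simp [hJ]
  have hP1 : Q * X * Q = Q := by
    rw [hQX, Matrix.sub_mul, Matrix.one_mul, Matrix.smul_mul, hJQ, smul_zero, sub_zero]
  have hP2 : X * Q * X = X := by
    rw [hXQ, Matrix.sub_mul, Matrix.one_mul, Matrix.smul_mul, hJX, smul_zero, sub_zero]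
  have hP3 : (Q * X)ᵀ = Q * X := by
    rw [hQX, Matrix.transpose_sub, Matrix.transpose_one, Matrix.transpose_smul, hJsymm]
  have hP4 : (X * Q)ᵀ = X * Q := by
    rw [hXQ, Matrix.transpose_sub, Matrix.transpose_one, Matrix.transpose_smul, hJsymm]
  have hex : ∃ Y : Matrix (Fin n) (Fin n) ℝ,
      Q * Y * Q = Q ∧ Y * Q * Y = Y ∧ (Q * Y)ᵀ = Q * Y ∧ (Y * Q)ᵀ = Y * Q :=
    ⟨X, hP1, hP2, hP3, hP4⟩
  have hpinv : pinv Q = X := by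
    unfold pinv
    rw [dif_pos hex]
    exact penrose_unique Q _ X hex.choose_spec ⟨hP1, hP2, hP3, hP4⟩
  rw [hpinv] at hB hζ
  have hXsym : Xᵀ = X := by
    rw [hX, Matrix.transpose_sub, hNsym, Matrix.transpose_smul, hJsymm]
  have hXones : X *ᵥ ones = 0 := by
    ext j
    have h0 := (Matrix.ext_iff.mpr hXJ) j j
    simpa [Matrix.mul_apply, Matrix.mulVec, dotProduct, hJ, hones] using h0
  intro i
  set s : ℝ := ∑ k, ζ k with hs
  set a : ℝ := ζ ⬝ᵥ Q *ᵥ ζ with ha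
  set v : Fin n → ℝ := p - Pi.single i 1 with hv
  have honesones : ones ⬝ᵥ ones = (n:ℝ) := by simp [dotProduct, hones, Finset.card_fin]
  have hvecQ : Matrix.vecMul ones Q = 0 := by rw [← hQsym, Matrix.vecMul_transpose, hQ1]
  have h1p : ones ⬝ᵥ p = 1 := by
    rw [hp, dotProduct_add, dotProduct_smul, dotProduct_smul, Matrix.dotProduct_mulVec,
      hvecQ, zero_dotProduct, smul_zero, zero_add, honesones, smul_eq_mul]
    field_simp
  have h1v : ones ⬝ᵥ v = 0 := by
    have hones1 : ones ⬝ᵥ Pi.single i 1 = 1 := by simp [hones, dotProduct, Pi.single_apply]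
    rw [hv, dotProduct_sub, h1p, hones1, sub_self]
  have hJv : J *ᵥ v = 0 := by
    ext j
    have h0 : ∑ k, v k = 0 := by simpa [dotProduct, hones] using h1v
    simpa [Matrix.mulVec, dotProduct, hJ] using h0
  set w : Fin n → ℝ := X *ᵥ v with hw
  have hQw : Q *ᵥ w = v := by
    rw [hw, Matrix.mulVec_mulVec, hQX, Matrix.sub_mulVec, Matrix.one_mulVec,
      Matrix.smul_mulVec, hJv, smul_zero, sub_zero]
  have h1w : ones ⬝ᵥ w = 0 := by
    rw [hw, Matrix.dotProduct_mulVec]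
    have hvX : Matrix.vecMul ones X = 0 := by rw [← hXsym, Matrix.vecMul_transpose, hXones]
    rw [hvX, zero_dotProduct]
  have hQζw : (Q *ᵥ ζ) ⬝ᵥ w = ζ ⬝ᵥ v := by
    rw [dotProduct_comm, Matrix.dotProduct_mulVec]
    have hvw2 : Matrix.vecMul w Q = v := by rw [← hQsym, Matrix.vecMul_transpose, hQw]
    rw [hvw2, dotProduct_comm]
  have hζones : ζ ⬝ᵥ ones = s := by simp [dotProduct, hones, hs]
  have hζp : ζ ⬝ᵥ p = (1/2) * a + (1/(n:ℝ)) * s := by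
    rw [hp, dotProduct_add, dotProduct_smul, dotProduct_smul, hζones, ← ha,
      smul_eq_mul, smul_eq_mul]
  have hζv : ζ ⬝ᵥ v = ζ ⬝ᵥ p - ζ i := by
    have hζs : ζ ⬝ᵥ Pi.single i 1 = ζ i := by simp
    rw [hv, dotProduct_sub, hζs]
  have hpw : p ⬝ᵥ w = (1/2) * (ζ ⬝ᵥ p - ζ i) := by
    rw [hp, add_dotProduct, smul_dotProduct, smul_dotProduct, hQζw, h1w, hζv,
      smul_eq_mul, smul_eq_mul, mul_zero, add_zero, ← hp]
  have hζi : ζ i = X i i := by rw [hζ]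
  have hXpi : (X *ᵥ p) i = (1/2) * ζ i - (1/(2*(n:ℝ))) * s := by
    have h1 : X *ᵥ (Q *ᵥ ζ) = ζ - (n:ℝ)⁻¹ • (J *ᵥ ζ) := by
      rw [Matrix.mulVec_mulVec, hXQ, Matrix.sub_mulVec, Matrix.one_mulVec,
        Matrix.smul_mulVec]
    have h2 : (J *ᵥ ζ) i = s := by simp [Matrix.mulVec, dotProduct, hJ, hs]
    rw [hp, Matrix.mulVec_add, Matrix.mulVec_smul, Matrix.mulVec_smul, h1, hXones,
      smul_zero, add_zero]
    simp only [Pi.smul_apply, Pi.sub_apply, h2, smul_eq_mul]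
    field_simp
  have hXsi : (X *ᵥ Pi.single i 1) i = ζ i := by
    rw [hζi]
    simp [Matrix.mulVec_single]
  have hwi : w i = -(1/2) * ζ i - (1/(2*(n:ℝ))) * s := by
    have : w = X *ᵥ p - X *ᵥ Pi.single i 1 := by rw [hw, hv, Matrix.mulVec_sub]
    rw [this]
    simp only [Pi.sub_apply, hXpi, hXsi]
    ring
  have hA : B *ᵥ v ⬝ᵥ B *ᵥ v = v ⬝ᵥ w := by
    rw [Matrix.dotProduct_mulVec, ← Matrix.mulVec_transpose, Matrix.mulVec_mulVec, hB,
      ← hw, dotProduct_comm]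
  have hvw : v ⬝ᵥ w = p ⬝ᵥ w - w i := by
    have hsw : Pi.single i 1 ⬝ᵥ w = w i := by simp
    rw [hv, sub_dotProduct, hsw]
  rw [hA, hvw, hpw, hζp, hwi, hσ2]
  field_simp
  ring
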